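/- The density matrix of a cris-cross graph is separable: for i₁ ≠ i₂, the graph C on vertices {(i₁,1),(i₁,2),(i₂,1),(i₂,2)} with edges {(i₁,1),(i₂,2)} and {(i₂,1),(i₁,2)} has ρ(C) separable in C^p ⊗ C^2. -/

import Mathlib

open Matrix Kronecker
open scoped BigOperators Classical ComplexOrder

noncomputable section

def grho {V : Type*} [Fintype V] [DecidableEq V] (G : SimpleGraph V) : Matrix V V ℂ :=
  ((2 * G.edgeFinset.card : ℂ))⁻¹ • G.lapMatrix ℂ

def degM {V : Type*} [Fintype V] [DecidableEq V] (G : SimpleGraph V) : Matrix V V ℂ :=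
  Matrix.diagonal fun v => (G.degree v : ℂ)

def ptB {p q : ℕ} {α : Type*} (A : Matrix (Fin p × Fin q) (Fin p × Fin q) α) :
    Matrix (Fin p × Fin q) (Fin p × Fin q) α :=
  fun x y => A (x.1, y.2) (y.1, x.2)

def gptB {p q : ℕ} (G : SimpleGraph (Fin p × Fin q)) : SimpleGraph (Fin p × Fin q) where
  Adj x y := G.Adj (x.1, y.2) (y.1, x.2)
  symm := ⟨fun x y h => G.adj_symm h⟩
  loopless := ⟨fun x h => G.irrefl h⟩

def IsDensityMatrix {n : Type*} [Fintype n] [DecidableEq n] (A : Matrix n n ℂ) : Prop :=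
  A.PosSemidef ∧ A.trace = 1

def Separable {p q : ℕ} (ρ : Matrix (Fin p × Fin q) (Fin p × Fin q) ℂ) : Prop :=
  ∃ (m : ℕ) (w : Fin m → ℝ) (σ : Fin m → Matrix (Fin p) (Fin p) ℂ)
    (τ : Fin m → Matrix (Fin q) (Fin q) ℂ),
    (∀ k, 0 ≤ w k) ∧ (∑ k, w k = 1) ∧
    (∀ k, IsDensityMatrix (σ k)) ∧ (∀ k, IsDensityMatrix (τ k)) ∧
    ρ = ∑ k, (w k : ℂ) • (σ k ⊗ₖ τ k)

def proj {n : Type*} (ψ : n → ℂ) : Matrix n n ℂ := vecMulVec ψ (star ψ)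

def crisCross (p : ℕ) (i₁ i₂ : Fin p) : SimpleGraph (Fin p × Fin 2) where
  Adj x y := (x = (i₁, 0) ∧ y = (i₂, 1)) ∨ (x = (i₂, 1) ∧ y = (i₁, 0)) ∨
    (x = (i₂, 0) ∧ y = (i₁, 1)) ∨ (x = (i₁, 1) ∧ y = (i₂, 0))
  symm := ⟨by tauto⟩
  loopless := ⟨by
    rintro x (⟨h1, h2⟩ | ⟨h1, h2⟩ | ⟨h1, h2⟩ | ⟨h1, h2⟩) <;> subst h1 <;>
      simp [Prod.ext_iff] at h2⟩


lemma proj_posSemidef {n : Type*} [Fintype n] (ψ : n → ℂ) : (proj ψ).PosSemidef := by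
  rw [proj, vecMulVec_eq Unit, ← conjTranspose_replicateCol]
  exact posSemidef_self_mul_conjTranspose _

lemma smul_posSemidef {n : Type*} [Fintype n] {M : Matrix n n ℂ} (hM : M.PosSemidef)
    {c : ℂ} (hc : 0 ≤ c) : (c • M).PosSemidef := by
  refine PosSemidef.of_dotProduct_mulVec_nonneg ?_ (fun x => ?_)
  · unfold Matrix.IsHermitian
    rw [conjTranspose_smul, hM.1, IsSelfAdjoint.of_nonneg hc]
  · rw [smul_mulVec, dotProduct_smul, smul_eq_mul]
    exact mul_nonneg hc (hM.dotProduct_mulVec_nonneg x)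

lemma half_nonneg : (0:ℂ) ≤ ((2:ℝ)⁻¹ : ℂ) := by
  rw [show ((2:ℝ)⁻¹ : ℂ) = (((2:ℝ)⁻¹ : ℝ) : ℂ) by push_cast; ring]
  exact Complex.zero_le_real.mpr (by norm_num)

lemma cc_card (p : ℕ) (i₁ i₂ : Fin p) (h : i₁ ≠ i₂) :
    (crisCross p i₁ i₂).edgeFinset.card = 2 := by
  have he : (crisCross p i₁ i₂).edgeFinset =
      {s((i₁,(0:Fin 2)),(i₂,1)), s((i₂,0),(i₁,1))} := by
    ext e
    induction e using Sym2.ind with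
    | _ x y =>
      simp only [SimpleGraph.mem_edgeFinset, SimpleGraph.mem_edgeSet]
      simp only [crisCross,
        Finset.mem_insert, Finset.mem_singleton, Sym2.eq_iff]
      tauto
  rw [he, Finset.card_insert_of_notMem, Finset.card_singleton]
  simp [Sym2.eq_iff, Prod.ext_iff, h, h.symm]

lemma cc_neighbors (p : ℕ) (i₁ i₂ : Fin p) (h : i₁ ≠ i₂) :
    ((crisCross p i₁ i₂).neighborFinset (i₁,0) = {(i₂,1)}) ∧
    ((crisCross p i₁ i₂).neighborFinset (i₂,1) = {(i₁,0)}) ∧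
    ((crisCross p i₁ i₂).neighborFinset (i₂,0) = {(i₁,1)}) ∧
    ((crisCross p i₁ i₂).neighborFinset (i₁,1) = {(i₂,0)}) := by
  refine ⟨?_, ?_, ?_, ?_⟩ <;>
  · ext y
    simp only [SimpleGraph.mem_neighborFinset]
    simp only [crisCross, Finset.mem_singleton,
      Prod.mk.injEq, Prod.ext_iff]
    constructor
    · rintro (⟨hx, hy⟩ | ⟨hx, hy⟩ | ⟨hx, hy⟩ | ⟨hx, hy⟩) <;>
        simp_all [Prod.ext_iff, h, h.symm]
    · rintro ⟨h1, h2⟩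
      tauto

lemma cc_degree (p : ℕ) (i₁ i₂ : Fin p) (h : i₁ ≠ i₂) (x : Fin p × Fin 2) :
    ((crisCross p i₁ i₂).degree x : ℂ) =
      (if x = (i₁,0) then 1 else 0) + (if x = (i₂,1) then 1 else 0) +
      (if x = (i₂,0) then 1 else 0) + (if x = (i₁,1) then 1 else 0) := by
  obtain ⟨n1, n2, n3, n4⟩ := cc_neighbors p i₁ i₂ h
  by_cases h1 : x = (i₁,0)
  · subst h1
    rw [← SimpleGraph.card_neighborFinset_eq_degree, n1]
    simp [Prod.ext_iff, h, h.symm]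
  by_cases h2 : x = (i₂,1)
  · subst h2
    rw [← SimpleGraph.card_neighborFinset_eq_degree, n2]
    simp [Prod.ext_iff, h, h.symm]
  by_cases h3 : x = (i₂,0)
  · subst h3
    rw [← SimpleGraph.card_neighborFinset_eq_degree, n3]
    simp [Prod.ext_iff, h, h.symm]
  by_cases h4 : x = (i₁,1)
  · subst h4
    rw [← SimpleGraph.card_neighborFinset_eq_degree, n4]
    simp [Prod.ext_iff, h, h.symm]
  · rw [← SimpleGraph.card_neighborFinset_eq_degree,
      show (crisCross p i₁ i₂).neighborFinset x = ∅ from ?_]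
    · simp [h1, h2, h3, h4]
    · ext y
      simp only [SimpleGraph.mem_neighborFinset]
      simp only [crisCross, Finset.notMem_empty, iff_false]
      rintro (⟨hx, _⟩ | ⟨hx, _⟩ | ⟨hx, _⟩ | ⟨hx, _⟩) <;> tauto

theorem stmt11 (p : ℕ) (i₁ i₂ : Fin p) (h : i₁ ≠ i₂) :
    Separable (grho (crisCross p i₁ i₂)) := by
  classical
  set sp : Fin p → ℂ := fun i => (if i = i₁ then 1 else 0) + (if i = i₂ then 1 else 0) with hsp
  set sm : Fin p → ℂ := fun i => (if i = i₁ then 1 else 0) - (if i = i₂ then 1 else 0) with hsm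
  set tm : Fin 2 → ℂ := fun u => if u = 0 then 1 else -1 with htm
  set tp : Fin 2 → ℂ := fun _ => 1 with htp
  refine ⟨2, ![1/2, 1/2],
    ![((2:ℝ)⁻¹ : ℂ) • proj sp, ((2:ℝ)⁻¹ : ℂ) • proj sm],
    ![((2:ℝ)⁻¹ : ℂ) • proj tm, ((2:ℝ)⁻¹ : ℂ) • proj tp], ?_, ?_, ?_, ?_, ?_⟩
  · intro k; fin_cases k <;> norm_num
  · simp [Fin.sum_univ_two]; norm_num
  · have hspv : ∀ i, sp i * (starRingEnd ℂ) (sp i) =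
        (if i = i₁ then 1 else 0) + (if i = i₂ then 1 else 0) := by
      intro i
      by_cases hi1 : i = i₁ <;> by_cases hi2 : i = i₂ <;>
        simp only [hsp, hsm] <;> simp_all
    have hsmv : ∀ i, sm i * (starRingEnd ℂ) (sm i) =
        (if i = i₁ then 1 else 0) + (if i = i₂ then 1 else 0) := by
      intro i
      by_cases hi1 : i = i₁ <;> by_cases hi2 : i = i₂ <;>
        simp only [hsp, hsm] <;> simp_all
    have trp : (proj sp).trace = 2 := by
      simp only [proj, Matrix.trace, Matrix.diag_apply, vecMulVec_apply,
        Pi.star_apply, RCLike.star_def]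
      rw [Finset.sum_congr rfl (fun i _ => hspv i), Finset.sum_add_distrib]
      simp [Finset.sum_ite_eq']
      norm_num
    have trm : (proj sm).trace = 2 := by
      simp only [proj, Matrix.trace, Matrix.diag_apply, vecMulVec_apply,
        Pi.star_apply, RCLike.star_def]
      rw [Finset.sum_congr rfl (fun i _ => hsmv i), Finset.sum_add_distrib]
      simp [Finset.sum_ite_eq']
      norm_num
    intro k; fin_cases k <;>
      simp only [IsDensityMatrix, Matrix.cons_val_zero, Matrix.cons_val_one,
        Matrix.head_cons, Fin.isValue, Fin.zero_eta, Fin.mk_one] <;>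
      refine ⟨smul_posSemidef (proj_posSemidef _) half_nonneg, ?_⟩
    · rw [Matrix.trace_smul, trp, smul_eq_mul]
      push_cast; norm_num
    · rw [Matrix.trace_smul, trm, smul_eq_mul]
      push_cast; norm_num
  · have trtm : (proj tm).trace = 2 := by
      simp only [proj, Matrix.trace, Matrix.diag_apply, vecMulVec_apply,
        Pi.star_apply, RCLike.star_def, Fin.sum_univ_two, htm]
      norm_num
    have trtp : (proj tp).trace = 2 := by
      simp only [proj, Matrix.trace, Matrix.diag_apply, vecMulVec_apply,
        Pi.star_apply, RCLike.star_def, Fin.sum_univ_two, htp]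
      norm_num
    intro k; fin_cases k <;>
      simp only [IsDensityMatrix, Matrix.cons_val_zero, Matrix.cons_val_one,
        Matrix.head_cons, Fin.isValue, Fin.zero_eta, Fin.mk_one] <;>
      refine ⟨smul_posSemidef (proj_posSemidef _) half_nonneg, ?_⟩
    · rw [Matrix.trace_smul, trtm, smul_eq_mul]
      push_cast; norm_num
    · rw [Matrix.trace_smul, trtp, smul_eq_mul]
      push_cast; norm_num
  · rw [grho, cc_card p i₁ i₂ h]
    ext ⟨i, u⟩ ⟨j, v⟩
    simp only [Matrix.smul_apply, SimpleGraph.lapMatrix, Matrix.sub_apply,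
      SimpleGraph.degMatrix, SimpleGraph.adjMatrix_apply, Matrix.diagonal_apply]
    rw [cc_degree p i₁ i₂ h]
    simp only [crisCross, SimpleGraph.Adj]
    simp only [Fin.sum_univ_two, Matrix.add_apply, Matrix.smul_apply,
      Matrix.cons_val_zero, Matrix.cons_val_one, Matrix.head_cons,
      kroneckerMap_apply, proj, vecMulVec_apply, Pi.star_apply, RCLike.star_def,
      hsp, hsm, htm, htp, Prod.mk.injEq]
    clear_value sp sm tm tp
    clear hsp hsm htm htp
    clear sp sm tm tp
    fin_cases u <;> fin_cases v <;>
      by_cases hi1 : i = i₁ <;> by_cases hi2 : i = i₂ <;>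
      by_cases hj1 : j = i₁ <;> by_cases hj2 : j = i₂ <;>
      simp_all <;>
      first
        | (intro hh; subst hh; simp_all)
        | norm_num
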